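/- Let S be a monoid, λ a nonzero cardinal, n ≤ λ a positive integer, and i ≤ n. Let x be the element of 𝓘_λ^n(S) with rows (a₁,…,a_i), (s₁,…,s_i), (b₁,…,b_i) and y the element with rows (c₁,…,c_i), (t₁,…,t_i), (d₁,…,d_i), both nonzero. Then x 𝓙 y in 𝓘_λ^n(S) if and only if there exists a permutation π of {1,…,i} such that s_j 𝓙 t_{π(j)} in S for all j = 1,…,i. -/
import Mathlib


open Classical

namespace ISemExt

/-- Carrier for the extension `𝓘_λ^n(S)`: an element is a function assigning to each
pair `(x,y)` of points of `lam` an optional value in `S` (its labelled graph). -/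
def Elem (lam S : Type) : Type := lam → lam → Option S

/-- The zero element (the empty map). -/
def zeroE (lam S : Type) : Elem lam S := fun _ _ => none

/-- Multiplication in `𝓘_λ^n(S)`: composition of labelled partial maps,
multiplying the labels along composable pairs. -/
noncomputable def mulE {lam S : Type} [Mul S] (f g : Elem lam S) : Elem lam S :=
  fun x z =>
    if h : ∃ y s t, f x y = some s ∧ g y z = some t then
      some (h.choose_spec.choose * h.choose_spec.choose_spec.choose)
    else none

/-- The graph of an element. -/
def graphOf {lam S : Type} (f : Elem lam S) : Set (lam × lam) :=
  {p | (f p.1 p.2).isSome}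

/-- `Valid n f` says that `f` is an element of `𝓘_λ^n(S)`: it is a partial
injective labelled map (in both directions) of rank at most `n`. -/
def Valid {lam S : Type} (n : ℕ) (f : Elem lam S) : Prop :=
  (∀ ⦃x y₁ y₂⦄, (f x y₁).isSome → (f x y₂).isSome → y₁ = y₂) ∧
  (∀ ⦃x₁ x₂ y⦄, (f x₁ y).isSome → (f x₂ y).isSome → x₁ = x₂) ∧
  (graphOf f).Finite ∧ (graphOf f).ncard ≤ n

/-- The element with rows `(a₁,…,a_i)`, `(s₁,…,s_i)`, `(b₁,…,b_i)`. -/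
noncomputable def mk3 {lam S : Type} {i : ℕ} (a : Fin i → lam) (s : Fin i → S)
    (b : Fin i → lam) : Elem lam S :=
  fun x y => if h : ∃ j, a j = x ∧ b j = y then some (s h.choose) else none

/-- Green's relation `𝓙` in the monoid `S`. -/
def GreenJS {S : Type} [Monoid S] (x y : S) : Prop :=
  (∃ u v, x = u * y * v) ∧ (∃ u v, y = u * x * v)

/-- `f ∈ T¹ g T¹` in the semigroup `T = 𝓘_λ^n(S)`. -/
def JBelowI {lam S : Type} [Mul S] (n : ℕ) (f g : Elem lam S) : Prop :=
  f = g ∨ (∃ u : Elem lam S, Valid n u ∧ f = mulE u g) ∨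
    (∃ v : Elem lam S, Valid n v ∧ f = mulE g v) ∨
    (∃ u v : Elem lam S, Valid n u ∧ Valid n v ∧ f = mulE (mulE u g) v)

/-- Green's relation `𝓙` in the semigroup `𝓘_λ^n(S)` (with identity adjoined). -/
def GreenJI {lam S : Type} [Mul S] (n : ℕ) (f g : Elem lam S) : Prop :=
  JBelowI n f g ∧ JBelowI n g f

/- ====================== auxiliary lemmas ====================== -/

variable {lam S : Type}

def DvdJ {S : Type} [Monoid S] (x y : S) : Prop := ∃ u v, x = u * y * v

lemma DvdJ.refl [Monoid S] (x : S) : DvdJ x x := ⟨1, 1, by simp⟩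

lemma DvdJ.trans [Monoid S] {x y z : S} (h1 : DvdJ x y) (h2 : DvdJ y z) : DvdJ x z := by
  obtain ⟨u, v, h1⟩ := h1
  obtain ⟨p, q, h2⟩ := h2
  exact ⟨u * p, q * v, by rw [h1, h2]; simp [mul_assoc]⟩

lemma mk3_apply {i : ℕ} {a : Fin i → lam} {s : Fin i → S} {b : Fin i → lam}
    (ha : Function.Injective a) (j : Fin i) :
    mk3 a s b (a j) (b j) = some (s j) := by
  have hex : ∃ k, a k = a j ∧ b k = b j := ⟨j, rfl, rfl⟩
  have h2 : mk3 a s b (a j) (b j) = some (s hex.choose) := dif_pos hex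
  rw [h2, ha hex.choose_spec.1]

lemma mk3_eq_some {i : ℕ} {a : Fin i → lam} {s : Fin i → S} {b : Fin i → lam}
    {x y : lam} {w : S} (h : mk3 a s b x y = some w) :
    ∃ j, a j = x ∧ b j = y ∧ w = s j := by
  by_cases hex : ∃ j, a j = x ∧ b j = y
  · have h2 : mk3 a s b x y = some (s hex.choose) := dif_pos hex
    exact ⟨hex.choose, hex.choose_spec.1, hex.choose_spec.2,
      (Option.some.inj (h2.symm.trans h)).symm⟩
  · have h2 : mk3 a s b x y = none := dif_neg hex
    rw [h2] at h; exact absurd h (by simp)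

lemma mk3_none {i : ℕ} {a : Fin i → lam} {s : Fin i → S} {b : Fin i → lam}
    {x y : lam} (h : ¬ ∃ j, a j = x ∧ b j = y) : mk3 a s b x y = none := dif_neg h

lemma mulE_some [Mul S] {f g : Elem lam S} {x z : lam} {w : S}
    (h : mulE f g x z = some w) :
    ∃ y p q, f x y = some p ∧ g y z = some q ∧ w = p * q := by
  by_cases hex : ∃ y p q, f x y = some p ∧ g y z = some q
  · have h2 : mulE f g x z
        = some (hex.choose_spec.choose * hex.choose_spec.choose_spec.choose) := dif_pos hex
    exact ⟨hex.choose, _, _, hex.choose_spec.choose_spec.choose_spec.1,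
      hex.choose_spec.choose_spec.choose_spec.2, (Option.some.inj (h2.symm.trans h)).symm⟩
  · have h2 : mulE f g x z = none := dif_neg hex
    rw [h2] at h; exact absurd h (by simp)

lemma mulE_eq_some [Mul S] {f g : Elem lam S} {x y z : lam} {p q : S}
    (h1 : f x y = some p) (h2 : g y z = some q)
    (huniq : ∀ y' p' q', f x y' = some p' → g y' z = some q' → p' * q' = p * q) :
    mulE f g x z = some (p * q) := by
  have hex : ∃ y p q, f x y = some p ∧ g y z = some q := ⟨y, p, q, h1, h2⟩
  have h3 : mulE f g x z
      = some (hex.choose_spec.choose * hex.choose_spec.choose_spec.choose) := dif_pos hex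
  rw [h3]
  exact congrArg some (huniq _ _ _ hex.choose_spec.choose_spec.choose_spec.1
    hex.choose_spec.choose_spec.choose_spec.2)

lemma mulE_none [Mul S] {f g : Elem lam S} {x z : lam}
    (h : ¬ ∃ y p q, f x y = some p ∧ g y z = some q) : mulE f g x z = none := dif_neg h

lemma graphOf_mk3 {i : ℕ} {a : Fin i → lam} {s : Fin i → S} {b : Fin i → lam} :
    graphOf (mk3 a s b) = Set.range (fun j => (a j, b j)) := by
  ext ⟨x, y⟩
  simp only [graphOf, Set.mem_setOf_eq, Set.mem_range, Prod.mk.injEq]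
  constructor
  · intro h
    obtain ⟨w, hw⟩ := Option.isSome_iff_exists.mp h
    obtain ⟨j, hj1, hj2, _⟩ := mk3_eq_some hw
    exact ⟨j, hj1, hj2⟩
  · rintro ⟨j, h1, h2⟩
    subst h1; subst h2
    have hex : ∃ k, a k = a j ∧ b k = b j := ⟨j, rfl, rfl⟩
    have h3 : mk3 a s b (a j) (b j) = some (s hex.choose) := dif_pos hex
    rw [h3]; rfl

lemma valid_mk3 {i n : ℕ} {a : Fin i → lam} {s : Fin i → S} {b : Fin i → lam}
    (ha : Function.Injective a) (hb : Function.Injective b) (hin : i ≤ n) :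
    Valid n (mk3 a s b) := by
  refine ⟨?_, ?_, ?_, ?_⟩
  · intro x y1 y2 h1 h2
    obtain ⟨w1, hw1⟩ := Option.isSome_iff_exists.mp h1
    obtain ⟨w2, hw2⟩ := Option.isSome_iff_exists.mp h2
    obtain ⟨j1, hj1, hj1', _⟩ := mk3_eq_some hw1
    obtain ⟨j2, hj2, hj2', _⟩ := mk3_eq_some hw2
    rw [← hj1', ← hj2', ha (hj1.trans hj2.symm)]
  · intro x1 x2 y h1 h2
    obtain ⟨w1, hw1⟩ := Option.isSome_iff_exists.mp h1
    obtain ⟨w2, hw2⟩ := Option.isSome_iff_exists.mp h2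
    obtain ⟨j1, hj1, hj1', _⟩ := mk3_eq_some hw1
    obtain ⟨j2, hj2, hj2', _⟩ := mk3_eq_some hw2
    rw [← hj1, ← hj2, hb (hj1'.trans hj2'.symm)]
  · rw [graphOf_mk3]; exact Set.finite_range _
  · rw [graphOf_mk3, ← Set.image_univ]
    calc ((fun j => (a j, b j)) '' Set.univ).ncard
        ≤ (Set.univ : Set (Fin i)).ncard := Set.ncard_image_le Set.finite_univ
      _ = i := by simp [Set.ncard_univ]
      _ ≤ n := hin


lemma mulE_mk3_mk3 [Mul S] {i : ℕ} {a : Fin i → lam} {u : Fin i → S} {b : Fin i → lam}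
    {c : Fin i → lam} {t : Fin i → S} {d : Fin i → lam} {π : Fin i → Fin i}
    {w : Fin i → S} {e : Fin i → lam}
    (ha : Function.Injective a) (hc : Function.Injective c)
    (hbc : b = fun j => c (π j)) (hw : w = fun j => u j * t (π j))
    (he : e = fun j => d (π j)) :
    mulE (mk3 a u b) (mk3 c t d) = mk3 a w e := by
  subst hbc; subst hw; subst he
  funext x z
  by_cases hex : ∃ j, a j = x ∧ d (π j) = z
  · obtain ⟨j, hj1, hj2⟩ := hex
    subst hj1; subst hj2
    have h1 : mk3 a u (fun j => c (π j)) (a j) (c (π j)) = some (u j) := mk3_apply ha j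
    have h2 : mk3 c t d (c (π j)) (d (π j)) = some (t (π j)) := mk3_apply hc (π j)
    have huniq : ∀ y' p' q', mk3 a u (fun j => c (π j)) (a j) y' = some p' →
        mk3 c t d y' (d (π j)) = some q' → p' * q' = u j * t (π j) := by
      intro y' p' q' hp hq
      obtain ⟨j', hj'1, hj'2, hj'3⟩ := mk3_eq_some hp
      obtain ⟨k, hk1, hk2, hk3⟩ := mk3_eq_some hq
      have ej : j' = j := ha hj'1
      subst ej
      have ek : k = π j' := hc (hk1.trans hj'2.symm)
      subst ek
      rw [hj'3, hk3]
    exact (mulE_eq_some h1 h2 huniq).trans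
      (mk3_apply (s := fun j => u j * t (π j)) (b := fun j => d (π j)) ha j).symm
  · have hnone : ¬ ∃ y p q, mk3 a u (fun j => c (π j)) x y = some p ∧
        mk3 c t d y z = some q := by
      rintro ⟨y, p, q, hp, hq⟩
      obtain ⟨j, hj1, hj2, _⟩ := mk3_eq_some hp
      obtain ⟨k, hk1, hk2, _⟩ := mk3_eq_some hq
      have ek : k = π j := hc (hk1.trans hj2.symm)
      subst ek
      exact hex ⟨j, hj1, hk2⟩
    exact (mulE_none hnone).trans (mk3_none hex).symm

lemma perm_cycle [Monoid S] {i : ℕ} (s : Fin i → S) (ρ : Equiv.Perm (Fin i))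
    (h : ∀ j, DvdJ (s j) (s (ρ j))) : ∀ j, DvdJ (s (ρ j)) (s j) := by
  have key : ∀ m j, DvdJ (s j) (s ((ρ ^ m) j)) := by
    intro m
    induction m with
    | zero => intro j; exact DvdJ.refl _
    | succ m ih =>
      intro j
      have h1 : DvdJ (s (ρ j)) (s ((ρ ^ m) (ρ j))) := ih (ρ j)
      have h2 : (ρ ^ (m + 1)) j = (ρ ^ m) (ρ j) := by
        rw [pow_succ]; rfl
      rw [h2]
      exact (h j).trans h1
  intro j
  have hpos : 0 < orderOf ρ := orderOf_pos ρ
  have h1 := key (orderOf ρ - 1) (ρ j)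
  have h2 : (ρ ^ (orderOf ρ - 1)) (ρ j) = j := by
    have h3 : ρ ^ (orderOf ρ - 1) * ρ = 1 := by
      rw [← pow_succ, Nat.sub_add_cancel hpos, pow_orderOf_eq_one]
    calc (ρ ^ (orderOf ρ - 1)) (ρ j) = (ρ ^ (orderOf ρ - 1) * ρ) j := rfl
      _ = j := by rw [h3]; rfl
  rwa [h2] at h1

lemma jbelow_analysis [Monoid S] {n i : ℕ} {a b c d : Fin i → lam} {s t : Fin i → S}
    (ha : Function.Injective a) (hb : Function.Injective b)
    (hc : Function.Injective c) (hd : Function.Injective d)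
    (h : JBelowI n (mk3 a s b) (mk3 c t d)) :
    ∃ π : Fin i → Fin i, Function.Injective π ∧ ∀ j, DvdJ (s j) (t (π j)) := by
  rcases h with h | ⟨u, hu, h⟩ | ⟨v, hv, h⟩ | ⟨u, v, hu, hv, h⟩
  · -- equality
    have key : ∀ j, ∃ k, d k = b j ∧ DvdJ (s j) (t k) := by
      intro j
      have h1 : mk3 a s b (a j) (b j) = some (s j) := mk3_apply ha j
      rw [h] at h1
      obtain ⟨k, hk1, hk2, hk3⟩ := mk3_eq_some h1
      exact ⟨k, hk2, ⟨1, 1, by rw [hk3]; simp⟩⟩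
    choose π h1 h2 using key
    exact ⟨π, fun j1 j2 e => hb ((h1 j1).symm.trans (e ▸ h1 j2)), h2⟩
  · -- x = u * y
    have key : ∀ j, ∃ k, d k = b j ∧ DvdJ (s j) (t k) := by
      intro j
      have h1 : mk3 a s b (a j) (b j) = some (s j) := mk3_apply ha j
      rw [h] at h1
      obtain ⟨r, p, q, hp, hq, hw⟩ := mulE_some h1
      obtain ⟨k, hk1, hk2, hk3⟩ := mk3_eq_some hq
      exact ⟨k, hk2, ⟨p, 1, by rw [mul_one, hw, hk3]⟩⟩
    choose π h1 h2 using key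
    exact ⟨π, fun j1 j2 e => hb ((h1 j1).symm.trans (e ▸ h1 j2)), h2⟩
  · -- x = y * v
    have key : ∀ j, ∃ k, c k = a j ∧ DvdJ (s j) (t k) := by
      intro j
      have h1 : mk3 a s b (a j) (b j) = some (s j) := mk3_apply ha j
      rw [h] at h1
      obtain ⟨r, p, q, hp, hq, hw⟩ := mulE_some h1
      obtain ⟨k, hk1, hk2, hk3⟩ := mk3_eq_some hp
      exact ⟨k, hk1, ⟨1, q, by rw [one_mul, hw, hk3]⟩⟩
    choose π h1 h2 using key
    exact ⟨π, fun j1 j2 e => ha ((h1 j1).symm.trans (e ▸ h1 j2)), h2⟩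
  · -- x = u * y * v
    have key : ∀ j, ∃ k, (u (a j) (c k)).isSome ∧ DvdJ (s j) (t k) := by
      intro j
      have h1 : mk3 a s b (a j) (b j) = some (s j) := mk3_apply ha j
      rw [h] at h1
      obtain ⟨r, p, q, hp, hq, hw⟩ := mulE_some h1
      obtain ⟨r', p', q', hp', hq', hw'⟩ := mulE_some hp
      obtain ⟨k, hk1, hk2, hk3⟩ := mk3_eq_some hq'
      refine ⟨k, ?_, ⟨p', q, by rw [hw, hw', hk3, mul_assoc p', ← mul_assoc]⟩⟩
      rw [hk1, hp']; rfl
    choose π h1 h2 using key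
    refine ⟨π, ?_, h2⟩
    intro j1 j2 e
    have e1 := h1 j1
    rw [e] at e1
    exact ha (hu.2.1 e1 (h1 j2))

lemma jbelow_construct [Monoid S] {n i : ℕ} (hin : i ≤ n)
    {a b c d : Fin i → lam} {s t : Fin i → S}
    (ha : Function.Injective a) (hb : Function.Injective b)
    (hc : Function.Injective c) (hd : Function.Injective d)
    (π : Equiv.Perm (Fin i)) (h : ∀ j, ∃ u v, s j = u * t (π j) * v) :
    JBelowI n (mk3 a s b) (mk3 c t d) := by
  choose u v huv using h
  have hcπ : Function.Injective (fun j => c (π j)) := fun j1 j2 e => π.injective (hc e)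
  have hdπ : Function.Injective (fun j => d (π j)) := fun j1 j2 e => π.injective (hd e)
  refine Or.inr (Or.inr (Or.inr ⟨mk3 a u (fun j => c (π j)),
    mk3 (fun j => d (π j)) v b, valid_mk3 ha hcπ hin, valid_mk3 hdπ hb hin, ?_⟩))
  have e1 : mulE (mk3 a u (fun j => c (π j))) (mk3 c t d)
      = mk3 a (fun j => u j * t (π j)) (fun j => d (π j)) :=
    mulE_mk3_mk3 ha hc rfl rfl rfl
  have e2 : mulE (mk3 a (fun j => u j * t (π j)) (fun j => d (π j)))
      (mk3 (fun j => d (π j)) v b) = mk3 a s b :=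
    mulE_mk3_mk3 (π := fun j => j) ha hdπ rfl (funext fun j => huv j) rfl
  rw [e1, e2]


/-- Characterization of Green's relation `𝓙` on `𝓘_λ^n(S)` for a monoid `S`. -/
theorem greenJ_iff (lam S : Type) [Nonempty lam] [Monoid S]
    (n i : ℕ) (hn : 0 < n) (hcard : (n : Cardinal) ≤ Cardinal.mk lam)
    (hi : 0 < i) (hin : i ≤ n)
    (a b c d : Fin i → lam) (s t : Fin i → S)
    (ha : Function.Injective a) (hb : Function.Injective b)
    (hc : Function.Injective c) (hd : Function.Injective d) :
    GreenJI n (mk3 a s b) (mk3 c t d) ↔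
      ∃ π : Equiv.Perm (Fin i), ∀ j, GreenJS (s j) (t (π j)) := by
  constructor
  · rintro ⟨h1, h2⟩
    obtain ⟨π, hπi, hπd⟩ := jbelow_analysis ha hb hc hd h1
    obtain ⟨σ, hσi, hσd⟩ := jbelow_analysis hc hd ha hb h2
    have hπb : Function.Bijective π := Finite.injective_iff_bijective.mp hπi
    have hσb : Function.Bijective σ := Finite.injective_iff_bijective.mp hσi
    have hρ : ∀ j, DvdJ (s j)
        (s (((Equiv.ofBijective π hπb).trans (Equiv.ofBijective σ hσb)) j)) :=
      fun j => (hπd j).trans (hσd (π j))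
    have hcyc := perm_cycle s ((Equiv.ofBijective π hπb).trans (Equiv.ofBijective σ hσb)) hρ
    exact ⟨Equiv.ofBijective π hπb, fun j => ⟨hπd j, (hσd (π j)).trans (hcyc j)⟩⟩
  · rintro ⟨π, hπ⟩
    constructor
    · exact jbelow_construct hin ha hb hc hd π (fun j => (hπ j).1)
    · refine jbelow_construct hin hc hd ha hb π.symm (fun k => ?_)
      obtain ⟨u, v, h⟩ := (hπ (π.symm k)).2
      exact ⟨u, v, by rwa [Equiv.apply_symm_apply] at h⟩


end ISemExt
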